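/- Let l be a nonzero integer, N = 12l² − 1, and B = (12l² − 1)²(1 − 3l²). Then the point P = (12l² − 1, 3(12l² − 1)l) lies on the curve y² = x³ + B, and [3]P has integer coordinates with x([3]P) = 576l⁶ − 288l⁴ + 36l² − 1. -/

import Mathlib

/-- The Mordell curve `y² = x³ + B` as a Weierstrass curve over `ℚ`. -/
def Mordell (B : ℚ) : WeierstrassCurve.Affine ℚ :=
  { a₁ := 0, a₂ := 0, a₃ := 0, a₄ := 0, a₆ := B }

/-- `B` is sixth-power-free: no sixth power of a prime divides it. -/
def SixthPowerFree (B : ℤ) : Prop := ∀ p : ℕ, p.Prime → ¬ ((p : ℤ) ^ 6 ∣ B)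

/-- A rational point on the Mordell curve is integral if it is affine with
integer coordinates. -/
def IsIntegralPoint {B : ℚ} (P : (Mordell B).Point) : Prop :=
  ∃ (x y : ℚ) (h : (Mordell B).Nonsingular x y),
    P = WeierstrassCurve.Affine.Point.some x y h ∧ x.den = 1 ∧ y.den = 1

lemma some_congr {F : Type*} [Field F] {W : WeierstrassCurve.Affine F} {x₁ y₁ x₂ y₂ : F}
    (h₁ : W.Nonsingular x₁ y₁) (hx : x₁ = x₂) (hy : y₁ = y₂) :
    ∃ h₂ : W.Nonsingular x₂ y₂, WeierstrassCurve.Affine.Point.some _ _ h₁ = .some _ _ h₂ := by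
  subst hx; subst hy; exact ⟨h₁, rfl⟩

theorem stmt_14 (l : ℤ) (hl : l ≠ 0) :
    ((3 * (12 * (l : ℚ) ^ 2 - 1) * l) ^ 2 =
        (12 * (l : ℚ) ^ 2 - 1) ^ 3 + (12 * (l : ℚ) ^ 2 - 1) ^ 2 * (1 - 3 * (l : ℚ) ^ 2)) ∧
    ∀ h : (Mordell ((12 * (l : ℚ) ^ 2 - 1) ^ 2 * (1 - 3 * (l : ℚ) ^ 2))).Nonsingular
        (12 * (l : ℚ) ^ 2 - 1) (3 * (12 * (l : ℚ) ^ 2 - 1) * l),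
      ∃ (y : ℚ)
        (h3 : (Mordell ((12 * (l : ℚ) ^ 2 - 1) ^ 2 * (1 - 3 * (l : ℚ) ^ 2))).Nonsingular
          (576 * (l : ℚ) ^ 6 - 288 * (l : ℚ) ^ 4 + 36 * (l : ℚ) ^ 2 - 1) y),
        (3 : ℤ) • WeierstrassCurve.Affine.Point.some _ _ h =
            WeierstrassCurve.Affine.Point.some _ _ h3 ∧ y.den = 1 := by
  have hl' : (l : ℚ) ≠ 0 := Int.cast_ne_zero.mpr hl
  have hl2 : (1 : ℤ) ≤ l ^ 2 := by rcases lt_or_gt_of_ne hl with h | h <;> nlinarith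
  have hN : (12 * (l : ℚ) ^ 2 - 1) ≠ 0 := by
    have : (1 : ℚ) ≤ (l : ℚ) ^ 2 := by exact_mod_cast hl2
    nlinarith
  set N : ℚ := 12 * (l : ℚ) ^ 2 - 1 with hNdef
  set b : ℚ := 3 * N * l with hbdef
  set W := Mordell (N ^ 2 * (1 - 3 * (l : ℚ) ^ 2)) with hW
  refine ⟨by ring, fun h => ?_⟩
  have hb : b ≠ 0 := by
    simp only [hbdef]; exact mul_ne_zero (mul_ne_zero three_ne_zero hN) hl'
  have hnegY : ∀ x y : ℚ, W.negY x y = -y := by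
    intro x y; simp [WeierstrassCurve.Affine.negY, hW, Mordell]
  have hy : b ≠ W.negY N b := by
    rw [hnegY]; intro hc; exact hb (by linarith)
  -- doubling
  have h2 := WeierstrassCurve.Affine.nonsingular_add h h (fun hc => hy hc.2)
  have eq2 : WeierstrassCurve.Affine.Point.some _ _ h + .some _ _ h = .some _ _ h2 :=
    WeierstrassCurve.Affine.Point.add_self_of_Y_ne hy
  -- slope for doubling
  have hslope : W.slope N N b b = N / (2 * l) := by
    rw [WeierstrassCurve.Affine.slope_of_Y_ne rfl hy, hnegY]
    simp only [hW, Mordell]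
    field_simp [hbdef]
    ring
  have hx2 : W.addX N N (W.slope N N b b) = N - N / (4 * l ^ 2) := by
    rw [WeierstrassCurve.Affine.addX, hslope]
    simp only [hW, Mordell]
    field_simp
    ring
  have hy2 : W.addY N N b (W.slope N N b b) =
      (N / (2 * l)) * (N / (4 * l ^ 2)) - b := by
    rw [WeierstrassCurve.Affine.addY, WeierstrassCurve.Affine.negAddY, hnegY, hx2, hslope]
    field_simp
    ring
  obtain ⟨h2', eq2'⟩ := some_congr h2 hx2 hy2
  -- addition of 2P and P : x-coordinates differ
  have hxne : N - N / (4 * l ^ 2) ≠ N := by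
    intro hc
    have : N / (4 * l ^ 2) = 0 := by linarith
    exact hN (by field_simp at this; simpa using this)
  have h3' := WeierstrassCurve.Affine.nonsingular_add h2' h (fun hc => absurd hc.1 hxne)
  have eq3 : WeierstrassCurve.Affine.Point.some _ _ h2' + .some _ _ h = .some _ _ h3' :=
    WeierstrassCurve.Affine.Point.add_of_X_ne hxne
  -- compute the slope of the secant
  have hslope3 : W.slope (N - N / (4 * l ^ 2)) N ((N / (2 * l)) * (N / (4 * l ^ 2)) - b) b =
      24 * (l : ℚ) ^ 3 - N / (2 * l) := by
    rw [WeierstrassCurve.Affine.slope_of_X_ne hxne,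
      div_eq_iff (sub_ne_zero.mpr hxne)]
    field_simp [hbdef]
    ring
  have hx3 : W.addX (N - N / (4 * l ^ 2)) N
      (W.slope (N - N / (4 * l ^ 2)) N ((N / (2 * l)) * (N / (4 * l ^ 2)) - b) b) =
      576 * (l : ℚ) ^ 6 - 288 * (l : ℚ) ^ 4 + 36 * (l : ℚ) ^ 2 - 1 := by
    rw [WeierstrassCurve.Affine.addX, hslope3]
    simp only [hW, Mordell, hNdef]
    field_simp
    ring
  have hy3 : W.addY (N - N / (4 * l ^ 2)) N ((N / (2 * l)) * (N / (4 * l ^ 2)) - b)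
      (W.slope (N - N / (4 * l ^ 2)) N ((N / (2 * l)) * (N / (4 * l ^ 2)) - b) b) =
      -13824 * (l : ℚ) ^ 9 + 10368 * (l : ℚ) ^ 7 - 2592 * (l : ℚ) ^ 5 + 252 * (l : ℚ) ^ 3
        - 9 * (l : ℚ) := by
    rw [WeierstrassCurve.Affine.addY, WeierstrassCurve.Affine.negAddY, hnegY,
      WeierstrassCurve.Affine.addX, hslope3]
    simp only [hW, Mordell, hNdef, hbdef]
    field_simp
    ring
  obtain ⟨h3, eq3'⟩ := some_congr h3' hx3 hy3
  refine ⟨_, h3, ?_, ?_⟩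
  · have : (3 : ℤ) • WeierstrassCurve.Affine.Point.some _ _ h =
        WeierstrassCurve.Affine.Point.some _ _ h + .some _ _ h + .some _ _ h := by
      rw [show (3 : ℤ) = 1 + 1 + 1 by norm_num, add_zsmul, add_zsmul, one_zsmul]
    rw [this, eq2, eq2', add_comm _ (WeierstrassCurve.Affine.Point.some _ _ h),
      add_comm (WeierstrassCurve.Affine.Point.some _ _ h) (.some _ _ h2'), eq3, eq3']
  · have hyint : (-13824 * (l : ℚ) ^ 9 + 10368 * (l : ℚ) ^ 7 - 2592 * (l : ℚ) ^ 5
        + 252 * (l : ℚ) ^ 3 - 9 * (l : ℚ)) =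
        ((-13824 * l ^ 9 + 10368 * l ^ 7 - 2592 * l ^ 5 + 252 * l ^ 3 - 9 * l : ℤ) : ℚ) := by
      push_cast; ring
    rw [hyint]
    exact Rat.den_intCast _
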